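/- arXiv:1609.09548 — 4 statements merged into one kernel-verified Lean document; each statement's English description precedes it below -/
import Mathlib

section
/- For the weighted generalized cost function: sum over t from 0 to n-1 of w(E_T(t)) * (f(t+1) - f(t)) equals the generalized hierarchical clustering cost sum over edges e={u,v} of w_e * f(r(u,v)), where f is any function with f(0) = 0. -/
/-- A rooted binary tree whose leaves are labelled by elements of `α`.
A hierarchical clustering of a vertex set is such a tree whose leaf set is the vertex set. -/
inductive HCTree (α : Type) where
  | leaf : α → HCTree α
  | node : HCTree α → HCTree α → HCTree α

namespace HCTree

variable {α : Type} [DecidableEq α]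

/-- The set of leaf labels of the tree. -/
def leaves : HCTree α → Finset α
  | leaf v => {v}
  | node l r => l.leaves ∪ r.leaves

/-- The leaf set of the minimal subtree of `T` containing both `u` and `v`
(i.e. the cluster at the lowest common ancestor of `u` and `v`). -/
def cluster : HCTree α → α → α → Finset α
  | leaf w, _, _ => {w}
  | node l r, u, v =>
    if u ∈ l.leaves ∧ v ∈ l.leaves then l.cluster u v
    else if u ∈ r.leaves ∧ v ∈ r.leaves then r.cluster u v
    else l.leaves ∪ r.leaves

/-- A tree is proper if its leaf labels are distinct, i.e. the leaf sets of the two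
children of every internal node are disjoint. -/
def proper : HCTree α → Prop
  | leaf _ => True
  | node l r => Disjoint l.leaves r.leaves ∧ l.proper ∧ r.proper

end HCTree


lemma HCTree.cluster_subset_leaves {α : Type} [DecidableEq α] (T : HCTree α) (u v : α) :
    T.cluster u v ⊆ T.leaves := by
  induction T with
  | leaf w => simp [HCTree.cluster, HCTree.leaves]
  | node l r ihl ihr =>
    simp only [HCTree.cluster, HCTree.leaves]
    split_ifs with h1 h2
    · exact ihl.trans Finset.subset_union_left
    · exact ihr.trans Finset.subset_union_right
    · exact subset_rfl

/-- for a weighted graph and any `f` with `f 0 = 0`,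
`∑_{t=0}^{n-1} w(E_T(t)) (f(t+1) - f(t)) = ∑_{e∈E} w_e f(r(e))`. -/
theorem hc_generalized_cost_eq_sum_of_levels {α : Type} [DecidableEq α]
    (T : HCTree α) (hT : T.proper)
    (V : Finset α) (hV : T.leaves = V) (n : ℕ) (hn : n = V.card)
    (E : Finset (α × α)) (hE : ∀ e ∈ E, e.1 ∈ V ∧ e.2 ∈ V)
    (w : α × α → ℝ) (hw : ∀ e ∈ E, 0 ≤ w e)
    (f : ℕ → ℝ) (hf0 : f 0 = 0) :
    ∑ t ∈ Finset.range n,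
        (∑ e ∈ E.filter (fun e => t < (T.cluster e.1 e.2).card), w e) * (f (t + 1) - f t)
      = ∑ e ∈ E, w e * f (T.cluster e.1 e.2).card := by
  have hc : ∀ e ∈ E, (T.cluster e.1 e.2).card ≤ n := by
    intro e _
    rw [hn, ← hV]
    exact Finset.card_le_card (HCTree.cluster_subset_leaves T e.1 e.2)
  calc ∑ t ∈ Finset.range n,
        (∑ e ∈ E.filter (fun e => t < (T.cluster e.1 e.2).card), w e) * (f (t + 1) - f t)
      = ∑ t ∈ Finset.range n, ∑ e ∈ E,
          (if t < (T.cluster e.1 e.2).card then w e * (f (t + 1) - f t) else 0) := by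
        refine Finset.sum_congr rfl fun t _ => ?_
        rw [Finset.sum_mul, Finset.sum_filter]
    _ = ∑ e ∈ E, ∑ t ∈ Finset.range n,
          (if t < (T.cluster e.1 e.2).card then w e * (f (t + 1) - f t) else 0) :=
        Finset.sum_comm
    _ = ∑ e ∈ E, w e * f (T.cluster e.1 e.2).card := by
        refine Finset.sum_congr rfl fun e he => ?_
        rw [← Finset.sum_filter]
        have : (Finset.range n).filter (fun t => t < (T.cluster e.1 e.2).card)
            = Finset.range (T.cluster e.1 e.2).card := by
          ext t
          simp only [Finset.mem_filter, Finset.mem_range]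
          have := hc e he
          omega
        rw [this, ← Finset.mul_sum, Finset.sum_range_sub, hf0, sub_zero]
end

section
/- Charging inequality for RSC: for each cluster A in the tree split into parts of sizes s(A) <= |A| - s(A), the sum over all clusters A of sum over t from |A| - s(A) + 1 to |A| of |E_OPT(floor(t/2)) restricted to A| is at most sum over t from 1 to n of |E_OPT(floor(t/2))|. -/
namespace HCTree

variable {α : Type} [DecidableEq α]

/-- For each cluster `A` of the tree, split into children of sizes
`s(A) ≤ |A| - s(A)`, sum `∑_{t=|A|-s(A)+1}^{|A|} |E_OPT(⌊t/2⌋) ∩ A|`,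
and add these charges over all clusters of the tree. -/
def chargeSum (Eopt : ℕ → Finset (α × α)) : HCTree α → ℕ
  | leaf _ => 0
  | node l r =>
    (∑ t ∈ Finset.Icc ((l.leaves ∪ r.leaves).card - min l.leaves.card r.leaves.card + 1)
        (l.leaves ∪ r.leaves).card,
      ((Eopt (t / 2)).filter
        (fun e => e.1 ∈ l.leaves ∪ r.leaves ∧ e.2 ∈ l.leaves ∪ r.leaves)).card)
      + l.chargeSum Eopt + r.chargeSum Eopt

end HCTree

namespace ChargingAux

open Finset

variable {α : Type} [DecidableEq α]

/-- restricted count -/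
def F (Eopt : ℕ → Finset (α × α)) (S : Finset α) (t : ℕ) : ℕ :=
  ((Eopt (t / 2)).filter (fun e => e.1 ∈ S ∧ e.2 ∈ S)).card

lemma F_mono (Eopt : ℕ → Finset (α × α)) {S S' : Finset α} (h : S ⊆ S') (t : ℕ) :
    F Eopt S t ≤ F Eopt S' t := by
  apply Finset.card_le_card
  intro e he
  simp only [Finset.mem_filter] at *
  exact ⟨he.1, h he.2.1, h he.2.2⟩

lemma F_add (Eopt : ℕ → Finset (α × α)) {S S' : Finset α} (hd : Disjoint S S') (t : ℕ) :
    F Eopt S t + F Eopt S' t ≤ F Eopt (S ∪ S') t := by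
  classical
  unfold F
  rw [← Finset.card_union_of_disjoint]
  · apply Finset.card_le_card
    apply Finset.union_subset <;> intro e he <;> simp only [Finset.mem_filter,
      Finset.mem_union] at * <;> tauto
  · rw [Finset.disjoint_filter]
    intro e _ ⟨h1, _⟩ ⟨h1', _⟩
    exact (Finset.disjoint_left.1 hd) h1 h1'

lemma key (Eopt : ℕ → Finset (α × α)) :
    ∀ T : HCTree α, T.proper →
      T.chargeSum Eopt ≤ ∑ t ∈ Finset.Icc 1 T.leaves.card, F Eopt T.leaves t := by
  intro T
  induction T with
  | leaf v => intro _; simp [HCTree.chargeSum]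
  | node l r ihl ihr =>
    rintro ⟨hdisj, hl, hr⟩
    have ihl' := ihl hl
    have ihr' := ihr hr
    set a := l.leaves.card with ha
    set b := r.leaves.card with hb
    have hcard : (l.leaves ∪ r.leaves).card = a + b := Finset.card_union_of_disjoint hdisj
    have hIoc : ∀ m : ℕ, Finset.Icc 1 m = Finset.Ioc 0 m := fun m => rfl
    show (∑ t ∈ Finset.Icc ((l.leaves ∪ r.leaves).card - min a b + 1) (l.leaves ∪ r.leaves).card,
        F Eopt (l.leaves ∪ r.leaves) t) + l.chargeSum Eopt + r.chargeSum Eopt ≤ _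
    rw [hcard]
    show _ ≤ ∑ t ∈ Finset.Icc 1 (l.leaves ∪ r.leaves).card, F Eopt (l.leaves ∪ r.leaves) t
    rw [hcard]
    set A := l.leaves ∪ r.leaves with hA
    have hsum : ∀ t, F Eopt l.leaves t + F Eopt r.leaves t ≤ F Eopt A t :=
      fun t => F_add Eopt hdisj t
    rcases le_total a b with hab | hab
    · have hmin : min a b = a := min_eq_left hab
      rw [hmin]
      have h1 : a + b - a + 1 = b + 1 := by omega
      rw [h1]
      have split : ∑ t ∈ Finset.Icc 1 (a + b), F Eopt A t
          = ∑ t ∈ Finset.Ioc 0 a, F Eopt A t + ∑ t ∈ Finset.Ioc a b, F Eopt A t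
            + ∑ t ∈ Finset.Ioc b (a + b), F Eopt A t := by
        rw [hIoc, Finset.sum_Ioc_consecutive _ (by omega) (by omega : a ≤ b),
          Finset.sum_Ioc_consecutive _ (by omega) (by omega : b ≤ a + b)]
      rw [split]
      have e1 : Finset.Icc (b + 1) (a + b) = Finset.Ioc b (a + b) := by ext x; simp only [Finset.mem_Icc, Finset.mem_Ioc]; omega
      rw [e1]
      have hrsplit : ∑ t ∈ Finset.Icc 1 b, F Eopt r.leaves t
          = ∑ t ∈ Finset.Ioc 0 a, F Eopt r.leaves t + ∑ t ∈ Finset.Ioc a b, F Eopt r.leaves t := by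
        rw [hIoc, Finset.sum_Ioc_consecutive _ (by omega) hab]
      have c1 : ∑ t ∈ Finset.Ioc 0 a, F Eopt l.leaves t
          + ∑ t ∈ Finset.Ioc 0 a, F Eopt r.leaves t ≤ ∑ t ∈ Finset.Ioc 0 a, F Eopt A t := by
        rw [← Finset.sum_add_distrib]
        exact Finset.sum_le_sum fun t _ => hsum t
      have c2 : ∑ t ∈ Finset.Ioc a b, F Eopt r.leaves t ≤ ∑ t ∈ Finset.Ioc a b, F Eopt A t :=
        Finset.sum_le_sum fun t _ => F_mono Eopt Finset.subset_union_right t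
      have hl2 : l.chargeSum Eopt ≤ ∑ t ∈ Finset.Ioc 0 a, F Eopt l.leaves t := by
        rw [← hIoc]; exact ihl'
      have hr2 : r.chargeSum Eopt
          ≤ ∑ t ∈ Finset.Ioc 0 a, F Eopt r.leaves t + ∑ t ∈ Finset.Ioc a b, F Eopt r.leaves t := by
        rw [← hrsplit]; exact ihr'
      omega
    · have hmin : min a b = b := min_eq_right hab
      rw [hmin]
      have h1 : a + b - b + 1 = a + 1 := by omega
      rw [h1]
      have split : ∑ t ∈ Finset.Icc 1 (a + b), F Eopt A t
          = ∑ t ∈ Finset.Ioc 0 b, F Eopt A t + ∑ t ∈ Finset.Ioc b a, F Eopt A t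
            + ∑ t ∈ Finset.Ioc a (a + b), F Eopt A t := by
        rw [hIoc, Finset.sum_Ioc_consecutive _ (by omega) (by omega : b ≤ a),
          Finset.sum_Ioc_consecutive _ (by omega) (by omega : a ≤ a + b)]
      rw [split]
      have e1 : Finset.Icc (a + 1) (a + b) = Finset.Ioc a (a + b) := by ext x; simp only [Finset.mem_Icc, Finset.mem_Ioc]; omega
      rw [e1]
      have hlsplit : ∑ t ∈ Finset.Icc 1 a, F Eopt l.leaves t
          = ∑ t ∈ Finset.Ioc 0 b, F Eopt l.leaves t + ∑ t ∈ Finset.Ioc b a, F Eopt l.leaves t := by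
        rw [hIoc, Finset.sum_Ioc_consecutive _ (by omega) hab]
      have c1 : ∑ t ∈ Finset.Ioc 0 b, F Eopt l.leaves t
          + ∑ t ∈ Finset.Ioc 0 b, F Eopt r.leaves t ≤ ∑ t ∈ Finset.Ioc 0 b, F Eopt A t := by
        rw [← Finset.sum_add_distrib]
        exact Finset.sum_le_sum fun t _ => hsum t
      have c2 : ∑ t ∈ Finset.Ioc b a, F Eopt l.leaves t ≤ ∑ t ∈ Finset.Ioc b a, F Eopt A t :=
        Finset.sum_le_sum fun t _ => F_mono Eopt Finset.subset_union_left t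
      have hr2 : r.chargeSum Eopt ≤ ∑ t ∈ Finset.Ioc 0 b, F Eopt r.leaves t := by
        rw [← hIoc]; exact ihr'
      have hl2 : l.chargeSum Eopt
          ≤ ∑ t ∈ Finset.Ioc 0 b, F Eopt l.leaves t + ∑ t ∈ Finset.Ioc b a, F Eopt l.leaves t := by
        rw [← hlsplit]; exact ihl'
      omega

end ChargingAux

/-- charging inequality for recursive sparsest cut. For a decreasing
family of edge sets `E_OPT(·)`, summing over all clusters `A` of the tree the
quantity `∑_{t=|A|-s(A)+1}^{|A|} |E_OPT(⌊t/2⌋) ∩ A|` is at most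
`∑_{t=1}^{n} |E_OPT(⌊t/2⌋)|`. -/



theorem charging_inequality {α : Type} [DecidableEq α]
    (T : HCTree α) (hT : T.proper)
    (V : Finset α) (hV : T.leaves = V) (n : ℕ) (hn : n = V.card)
    (Eopt : ℕ → Finset (α × α))
    (hdec : ∀ t t' : ℕ, t ≤ t' → Eopt t' ⊆ Eopt t)
    (hEV : ∀ t, ∀ e ∈ Eopt t, e.1 ∈ V ∧ e.2 ∈ V) :
    T.chargeSum Eopt ≤ ∑ t ∈ Finset.Icc 1 n, (Eopt (t / 2)).card := by
  have h := ChargingAux.key Eopt T hT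
  calc T.chargeSum Eopt ≤ ∑ t ∈ Finset.Icc 1 T.leaves.card, ChargingAux.F Eopt T.leaves t := h
    _ ≤ ∑ t ∈ Finset.Icc 1 n, (Eopt (t / 2)).card := by
        rw [hV, ← hn]
        exact Finset.sum_le_sum fun t _ => Finset.card_le_card (Finset.filter_subset _ _)
end

section
/- For any hierarchical clustering tree T of graph G and the linear ordering pi of the vertices induced by the left-to-right order of the leaves of T, for every edge {u,v}: |pi(u) - pi(v)| <= |leaves(T[u v v])|, i.e., the linear arrangement stretch of each edge is at most the number of leaves of the minimal subtree containing both endpoints. Consequently the minimum linear arrangement cost of G is at most the hierarchical clustering cost of T. -/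
namespace HCTree

variable {α : Type} [DecidableEq α]

/-- The left-to-right list of leaves of the tree (its planar embedding order). -/
def leafList : HCTree α → List α
  | leaf v => [v]
  | node l r => l.leafList ++ r.leafList

theorem mem_leafList {T : HCTree α} {v : α} : v ∈ T.leafList ↔ v ∈ T.leaves := by
  induction T with
  | leaf w => simp [leafList, leaves]
  | node l r ihl ihr => simp [leafList, leaves, ihl, ihr]

theorem nodup_leafList {T : HCTree α} (hT : T.proper) : T.leafList.Nodup := by
  induction T with
  | leaf w => simp [leafList]
  | node l r ihl ihr =>
    obtain ⟨hd, hl, hr⟩ := hT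
    refine List.Nodup.append (ihl hl) (ihr hr) ?_
    intro a ha hb
    exact (Finset.disjoint_left.mp hd) (mem_leafList.mp ha) (mem_leafList.mp hb)

theorem length_leafList {T : HCTree α} (hT : T.proper) :
    T.leafList.length = T.leaves.card := by
  induction T with
  | leaf w => simp [leafList, leaves]
  | node l r ihl ihr =>
    obtain ⟨hd, hl, hr⟩ := hT
    simp [leafList, leaves, List.length_append, ihl hl, ihr hr,
      Finset.card_union_of_disjoint hd]

theorem index_diff_le_cluster {T : HCTree α} (hT : T.proper) {u v : α}
    (hu : u ∈ T.leaves) (hv : v ∈ T.leaves) :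
    ((T.leafList.idxOf u : ℤ) - (T.leafList.idxOf v : ℤ)).natAbs
      ≤ (T.cluster u v).card := by
  induction T with
  | leaf w =>
    simp [leaves] at hu hv
    subst hu; subst hv
    simp [cluster]
  | node l r ihl ihr =>
    obtain ⟨hd, hl, hr⟩ := hT
    simp only [leaves, Finset.mem_union] at hu hv
    by_cases h1 : u ∈ l.leaves ∧ v ∈ l.leaves
    · rw [show (l.node r).cluster u v = l.cluster u v by rw [cluster, if_pos h1]]
      have hum : u ∈ l.leafList := mem_leafList.mpr h1.1
      have hvm : v ∈ l.leafList := mem_leafList.mpr h1.2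
      rw [leafList, List.idxOf_append_of_mem hum, List.idxOf_append_of_mem hvm]
      exact ihl hl h1.1 h1.2
    · by_cases h2 : u ∈ r.leaves ∧ v ∈ r.leaves
      · rw [show (l.node r).cluster u v = r.cluster u v by
          rw [cluster, if_neg h1, if_pos h2]]
        have hun : u ∉ l.leafList := fun h =>
          Finset.disjoint_left.mp hd (mem_leafList.mp h) h2.1
        have hvn : v ∉ l.leafList := fun h =>
          Finset.disjoint_left.mp hd (mem_leafList.mp h) h2.2
        rw [leafList, List.idxOf_append_of_notMem hun,
          List.idxOf_append_of_notMem hvn]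
        have : ((l.leafList.length + r.leafList.idxOf u : ℕ) : ℤ)
            - ((l.leafList.length + r.leafList.idxOf v : ℕ) : ℤ)
            = (r.leafList.idxOf u : ℤ) - (r.leafList.idxOf v : ℤ) := by
          push_cast; ring
        rw [this]
        exact ihr hr h2.1 h2.2
      · rw [show (l.node r).cluster u v = l.leaves ∪ r.leaves by
          rw [cluster, if_neg h1, if_neg h2]]
        have hum : u ∈ (l.node r).leafList := mem_leafList.mpr (by
          simp [leaves, Finset.mem_union]; tauto)
        have hvm : v ∈ (l.node r).leafList := mem_leafList.mpr (by
          simp [leaves, Finset.mem_union]; tauto)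
        have hlen : (l.node r).leafList.length = (l.leaves ∪ r.leaves).card := by
          have := length_leafList (T := l.node r) ⟨hd, hl, hr⟩
          simpa [leaves] using this
        have hiu : (l.node r).leafList.idxOf u < (l.leaves ∪ r.leaves).card := by
          rw [← hlen]; exact List.idxOf_lt_length_iff.mpr hum
        have hiv : (l.node r).leafList.idxOf v < (l.leaves ∪ r.leaves).card := by
          rw [← hlen]; exact List.idxOf_lt_length_iff.mpr hvm
        omega

end HCTree

/-- for the linear ordering `π` of the vertices induced by the
left-to-right order of the leaves of `T`, every edge `{u,v}` satisfies
`|π(u) - π(v)| ≤ |leaves(T[u ∨ v])|`; consequently the minimum linear arrangement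
cost of `G` is at most the hierarchical clustering cost of `T`. -/
theorem linear_arrangement_le_hc_cost {α : Type} [DecidableEq α]
    (T : HCTree α) (hT : T.proper)
    (V : Finset α) (hV : T.leaves = V) (n : ℕ) (hn : n = V.card)
    (E : Finset (α × α)) (hE : ∀ e ∈ E, e.1 ∈ V ∧ e.2 ∈ V)
    (π : α → ℕ) (hπ : ∀ v, π v = T.leafList.idxOf v + 1) :
    (∀ e ∈ E, ((π e.1 : ℤ) - (π e.2 : ℤ)).natAbs ≤ (T.cluster e.1 e.2).card) ∧
    ∃ σ : α → ℕ, Set.BijOn σ (↑V) (Set.Icc 1 n) ∧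
      ∑ e ∈ E, ((σ e.1 : ℤ) - (σ e.2 : ℤ)).natAbs
        ≤ ∑ e ∈ E, (T.cluster e.1 e.2).card := by
  have hlen : T.leafList.length = n := by rw [HCTree.length_leafList hT, hV, hn]
  have key : ∀ e ∈ E, ((π e.1 : ℤ) - (π e.2 : ℤ)).natAbs ≤ (T.cluster e.1 e.2).card := by
    intro e he
    obtain ⟨h1, h2⟩ := hE e he
    have : ((π e.1 : ℤ) - (π e.2 : ℤ))
        = (T.leafList.idxOf e.1 : ℤ) - (T.leafList.idxOf e.2 : ℤ) := by
      rw [hπ, hπ]; push_cast; ring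
    rw [this]
    exact HCTree.index_diff_le_cluster hT (hV ▸ h1) (hV ▸ h2)
  refine ⟨key, π, ⟨?_, ?_, ?_⟩, Finset.sum_le_sum key⟩
  · intro v hv
    have hvm : v ∈ T.leafList := HCTree.mem_leafList.mpr (hV ▸ hv)
    have := List.idxOf_lt_length_iff.mpr hvm
    simp only [Set.mem_Icc, hπ]
    omega
  · intro a ha b hb hab
    have ham : a ∈ T.leafList := HCTree.mem_leafList.mpr (hV ▸ ha)
    have hbm : b ∈ T.leafList := HCTree.mem_leafList.mpr (hV ▸ hb)
    rw [hπ, hπ] at hab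
    exact (List.idxOf_inj ham).mp (by omega)
  · intro k hk
    simp only [Set.mem_Icc] at hk
    have hk1 : k - 1 < T.leafList.length := by omega
    refine ⟨T.leafList.get ⟨k - 1, hk1⟩, ?_, ?_⟩
    · have : T.leafList.get ⟨k - 1, hk1⟩ ∈ T.leafList := List.get_mem _ _
      exact_mod_cast hV ▸ HCTree.mem_leafList.mp this
    · have := List.get_idxOf (HCTree.nodup_leafList hT) ⟨k - 1, hk1⟩
      rw [hπ]
      simp only [this]
      omega
end

section
/- Validity of the spreading constraint for ultrametrics from trees: for any rooted binary tree T with leaf set V, defining l(u,v) = |leaves(T[u ∨ v])| for distinct leaves u, v, for every subset U of V and every v in U: sum over u in U of l(u,v) >= (|U|^2 - 1)/2 (with l(v,v) = 0). -/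
namespace HCTree

variable {α : Type} [DecidableEq α]

lemma cluster_subset_leaves_s11 (T : HCTree α) (u v : α) : T.cluster u v ⊆ T.leaves := by
  induction T with
  | leaf w => simp [cluster, leaves]
  | node l r ihl ihr =>
    simp only [cluster, leaves]
    split_ifs
    · exact ihl.trans Finset.subset_union_left
    · exact ihr.trans Finset.subset_union_right
    · exact subset_rfl

lemma mem_cluster (T : HCTree α) (hT : T.proper) {u v : α}
    (hu : u ∈ T.leaves) (hv : v ∈ T.leaves) :
    u ∈ T.cluster u v ∧ v ∈ T.cluster u v := by
  induction T with
  | leaf w =>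
    simp only [leaves, Finset.mem_singleton] at hu hv
    subst hu; subst hv
    simp [cluster]
  | node l r ihl ihr =>
    obtain ⟨hd, pl, pr⟩ := hT
    simp only [cluster]
    split_ifs with h1 h2
    · exact ihl pl h1.1 h1.2
    · exact ihr pr h2.1 h2.2
    · simp only [leaves] at hu hv
      exact ⟨hu, hv⟩

lemma cluster_nested (T : HCTree α) (hT : T.proper) {u u' v : α}
    (hu : u ∈ T.leaves) (hu' : u' ∈ T.leaves) (hv : v ∈ T.leaves) :
    T.cluster u v ⊆ T.cluster u' v ∨ T.cluster u' v ⊆ T.cluster u v := by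
  induction T with
  | leaf w => left; simp [cluster]
  | node l r ihl ihr =>
    obtain ⟨hd, pl, pr⟩ := hT
    simp only [leaves, Finset.mem_union] at hu hu' hv
    simp only [cluster]
    rcases hv with hvl | hvr
    · have hvnr : v ∉ r.leaves := Finset.disjoint_left.mp hd hvl
      by_cases hul : u ∈ l.leaves
      · by_cases hu'l : u' ∈ l.leaves
        · rw [if_pos ⟨hul, hvl⟩, if_pos ⟨hu'l, hvl⟩]
          exact ihl pl hul hu'l hvl
        · rw [if_pos ⟨hul, hvl⟩,
            if_neg (show ¬(u' ∈ l.leaves ∧ v ∈ l.leaves) from fun h => hu'l h.1),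
            if_neg (show ¬(u' ∈ r.leaves ∧ v ∈ r.leaves) from fun h => hvnr h.2)]
          left
          exact (cluster_subset_leaves_s11 l u v).trans Finset.subset_union_left
      · rw [if_neg (show ¬(u ∈ l.leaves ∧ v ∈ l.leaves) from fun h => hul h.1),
          if_neg (show ¬(u ∈ r.leaves ∧ v ∈ r.leaves) from fun h => hvnr h.2)]
        by_cases hu'l : u' ∈ l.leaves
        · rw [if_pos ⟨hu'l, hvl⟩]
          right
          exact (cluster_subset_leaves_s11 l u' v).trans Finset.subset_union_left
        · rw [if_neg (show ¬(u' ∈ l.leaves ∧ v ∈ l.leaves) from fun h => hu'l h.1),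
            if_neg (show ¬(u' ∈ r.leaves ∧ v ∈ r.leaves) from fun h => hvnr h.2)]
          left; exact subset_rfl
    · have hvnl : v ∉ l.leaves := Finset.disjoint_right.mp hd hvr
      rw [if_neg (show ¬(u ∈ l.leaves ∧ v ∈ l.leaves) from fun h => hvnl h.2),
        if_neg (show ¬(u' ∈ l.leaves ∧ v ∈ l.leaves) from fun h => hvnl h.2)]
      by_cases hur : u ∈ r.leaves
      · by_cases hu'r : u' ∈ r.leaves
        · rw [if_pos ⟨hur, hvr⟩, if_pos ⟨hu'r, hvr⟩]
          exact ihr pr hur hu'r hvr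
        · rw [if_pos ⟨hur, hvr⟩,
            if_neg (show ¬(u' ∈ r.leaves ∧ v ∈ r.leaves) from fun h => hu'r h.1)]
          left
          exact (cluster_subset_leaves_s11 r u v).trans Finset.subset_union_right
      · rw [if_neg (show ¬(u ∈ r.leaves ∧ v ∈ r.leaves) from fun h => hur h.1)]
        by_cases hu'r : u' ∈ r.leaves
        · rw [if_pos ⟨hu'r, hvr⟩]
          right
          exact (cluster_subset_leaves_s11 r u' v).trans Finset.subset_union_right
        · rw [if_neg (show ¬(u' ∈ r.leaves ∧ v ∈ r.leaves) from fun h => hu'r h.1)]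
          left; exact subset_rfl

lemma ball_card (T : HCTree α) (hT : T.proper) {v : α} (hv : v ∈ T.leaves)
    (S : Finset α) (hS : S ⊆ T.leaves) (hvS : v ∉ S) (m : ℕ) :
    (S.filter (fun u => (T.cluster u v).card ≤ m)).card ≤ m - 1 := by
  set B := S.filter (fun u => (T.cluster u v).card ≤ m) with hB
  rcases B.eq_empty_or_nonempty with he | hne
  · simp [he]
  · obtain ⟨u0, hu0, hmax⟩ := B.exists_max_image (fun u => (T.cluster u v).card) hne
    have hu0S : u0 ∈ S := (Finset.mem_filter.mp hu0).1
    have hsub : insert v B ⊆ T.cluster u0 v := by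
      intro x hx
      rcases Finset.mem_insert.mp hx with rfl | hxB
      · exact (mem_cluster T hT (hS hu0S) hv).2
      · have hxS : x ∈ S := (Finset.mem_filter.mp hxB).1
        rcases cluster_nested T hT (hS hxS) (hS hu0S) hv with hss | hss
        · exact hss (mem_cluster T hT (hS hxS) hv).1
        · have heq := Finset.eq_of_subset_of_card_le hss (hmax x hxB)
          rw [heq]
          exact (mem_cluster T hT (hS hxS) hv).1
    have hvB : v ∉ B := fun h => hvS (Finset.mem_filter.mp h).1
    have h1 : B.card + 1 ≤ m := by
      have := Finset.card_le_card hsub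
      rw [Finset.card_insert_of_notMem hvB] at this
      exact le_trans (by omega) (le_trans this (Finset.mem_filter.mp hu0).2)
    omega

lemma sum_lower (f : α → ℕ) (S : Finset α)
    (h : ∀ m, (S.filter (fun u => f u ≤ m)).card ≤ m - 1) :
    S.card * (S.card + 3) ≤ 2 * ∑ u ∈ S, f u := by
  induction S using Finset.strongInduction with
  | _ S ih =>
    rcases S.eq_empty_or_nonempty with rfl | hne
    · simp
    · obtain ⟨u0, hu0, hmax⟩ := S.exists_max_image f hne
      have hall : S.filter (fun u => f u ≤ f u0) = S :=
        Finset.filter_true_of_mem hmax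
      have h1 : S.card ≤ f u0 - 1 := by
        have := h (f u0); rwa [hall] at this
      have hpos : 1 ≤ S.card := Finset.card_pos.mpr hne
      have hf0 : S.card + 1 ≤ f u0 := by omega
      have hsub : S.erase u0 ⊂ S := Finset.erase_ssubset hu0
      have hh : ∀ m, ((S.erase u0).filter (fun u => f u ≤ m)).card ≤ m - 1 := by
        intro m
        exact le_trans (Finset.card_le_card
          (Finset.filter_subset_filter _ (Finset.erase_subset _ _))) (h m)
      have ihe := ih (S.erase u0) hsub hh
      have hcard : (S.erase u0).card = S.card - 1 := Finset.card_erase_of_mem hu0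
      have hsum : ∑ u ∈ S.erase u0, f u + f u0 = ∑ u ∈ S, f u :=
        Finset.sum_erase_add S f hu0
      obtain ⟨n, hn⟩ : ∃ n, S.card = n + 1 := ⟨S.card - 1, by omega⟩
      rw [hn]
      rw [hcard, hn] at ihe
      simp only [Nat.add_sub_cancel] at ihe
      nlinarith [hf0, ihe, hsum]

end HCTree

/-- for the tree ultrametric `l(u,v) = |leaves(T[u ∨ v])|`
(with `l(v,v) = 0`), every `U ⊆ V` and `v ∈ U` satisfy
`∑_{u ∈ U} l(u,v) ≥ (|U|² - 1)/2`. -/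
theorem tree_ultrametric_spreading {α : Type} [DecidableEq α]
    (T : HCTree α) (hT : T.proper)
    (U : Finset α) (hU : U ⊆ T.leaves) (v : α) (hv : v ∈ U) :
    ((U.card : ℝ) ^ 2 - 1) / 2
      ≤ ∑ u ∈ U, (if u = v then (0 : ℝ) else ((T.cluster u v).card : ℝ)) := by
  classical
  have hvl : v ∈ T.leaves := hU hv
  set S := U.erase v with hSdef
  have hsum : ∑ u ∈ U, (if u = v then (0:ℝ) else ((T.cluster u v).card : ℝ))
      = ∑ u ∈ S, ((T.cluster u v).card : ℝ) := by
    rw [← Finset.sum_erase_add U _ hv, if_pos rfl, add_zero]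
    exact Finset.sum_congr rfl fun x hx => if_neg (Finset.ne_of_mem_erase hx)
  have hSsub : S ⊆ T.leaves := (Finset.erase_subset _ _).trans hU
  have hvS : v ∉ S := Finset.notMem_erase _ _
  have hball := fun m => HCTree.ball_card T hT hvl S hSsub hvS m
  have key := HCTree.sum_lower (fun u => (T.cluster u v).card) S hball
  have hcast : ∑ u ∈ S, ((T.cluster u v).card : ℝ)
      = ((∑ u ∈ S, (T.cluster u v).card : ℕ) : ℝ) := by push_cast; rfl
  have hk : 1 ≤ U.card := Finset.card_pos.mpr ⟨v, hv⟩
  have hScard : S.card = U.card - 1 := Finset.card_erase_of_mem hv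
  have hk1 : U.card = S.card + 1 := by omega
  rw [hsum, hcast, hk1]
  have keyR : (S.card : ℝ) * ((S.card : ℝ) + 3)
      ≤ 2 * ((∑ u ∈ S, (T.cluster u v).card : ℕ) : ℝ) := by exact_mod_cast key
  rw [div_le_iff₀ (by norm_num : (0:ℝ) < 2)]
  push_cast
  nlinarith [keyR, Nat.cast_nonneg (α := ℝ) S.card]
end
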